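/- Let a : Fin n → ℝ be strictly increasing and suppose λ ∈ ℝ satisfies E·∑_i exp(λ a_i) = ∑_i a_i exp(λ a_i). Then the state y with y_i = exp(λ a_i)/∑_j exp(λ a_j) satisfies ⟨a|y⟩ = E and σ(y) ≥ σ(x) for every x ∈ Δⁿ with ⟨a|x⟩ = E. -/

import Mathlib

open Finset

theorem maxent_state_from_multiplier (n : ℕ) (hn : 2 ≤ n) (a : Fin n → ℝ)
    (ha : StrictMono a) (E : ℝ) (lam : ℝ)
    (hlam : E * ∑ i, Real.exp (lam * a i) = ∑ i, a i * Real.exp (lam * a i)) :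
    let y : Fin n → ℝ := fun i => Real.exp (lam * a i) / (∑ j, Real.exp (lam * a j))
    (∑ i, a i * y i = E) ∧
      ∀ x : Fin n → ℝ, (∀ i, 0 ≤ x i) → (∀ i, x i ≤ 1) → (∑ i, x i = 1) →
        (∑ i, a i * x i = E) →
        (-∑ i, x i * Real.log (x i)) ≤ (-∑ i, y i * Real.log (y i)) := by
  intro y
  have hn' : Nonempty (Fin n) := ⟨⟨0, by omega⟩⟩
  set Z : ℝ := ∑ j, Real.exp (lam * a j) with hZdef
  have hZ : 0 < Z := Finset.sum_pos (fun i _ => Real.exp_pos _) univ_nonempty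
  have hlogy : ∀ i, Real.log (y i) = lam * a i - Real.log Z := by
    intro i
    simp [y, ← hZdef, Real.log_div (Real.exp_ne_zero _) hZ.ne', Real.log_exp]
  have hysum : ∑ i, y i = 1 := by
    simp [y, ← hZdef, ← Finset.sum_div, div_self hZ.ne']
  have hay : ∑ i, a i * y i = E := by
    have h1 : ∑ i, a i * y i = (∑ i, a i * Real.exp (lam * a i)) / Z := by
      rw [Finset.sum_div]; apply Finset.sum_congr rfl; intro i _
      simp [y, ← hZdef, mul_div_assoc]
    rw [h1, ← hlam, mul_div_assoc, div_self hZ.ne', mul_one]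
  refine ⟨hay, fun x hx0 hx1 hxs hxE => ?_⟩
  have hσy : (-∑ i, y i * Real.log (y i)) = -(lam * E) + Real.log Z := by
    have h1 : ∑ i, y i * Real.log (y i) = lam * E - Real.log Z := by
      calc ∑ i, y i * Real.log (y i) = ∑ i, (lam * (a i * y i) - Real.log Z * y i) := by
            apply Finset.sum_congr rfl; intro i _; rw [hlogy i]; ring
        _ = lam * (∑ i, a i * y i) - Real.log Z * ∑ i, y i := by
            rw [Finset.sum_sub_distrib, Finset.mul_sum, Finset.mul_sum]
        _ = lam * E - Real.log Z := by rw [hay, hysum]; ring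
    rw [h1]; ring
  have key : ∑ i, x i * (Real.log (y i) - Real.log (x i)) ≤ 0 := by
    have hle : ∀ i ∈ univ, x i * (Real.log (y i) - Real.log (x i)) ≤ y i - x i := by
      intro i _
      rcases eq_or_lt_of_le (hx0 i) with h | h
      · simp [← h]
        exact div_nonneg (Real.exp_pos _).le hZ.le
      · have hy : 0 < y i := div_pos (Real.exp_pos _) hZ
        have hld : Real.log (y i) - Real.log (x i) = Real.log (y i / x i) := by
          rw [Real.log_div hy.ne' h.ne']
        rw [hld]
        have hlog : Real.log (y i / x i) ≤ y i / x i - 1 :=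
          Real.log_le_sub_one_of_pos (div_pos hy h)
        calc x i * Real.log (y i / x i) ≤ x i * (y i / x i - 1) :=
              mul_le_mul_of_nonneg_left hlog h.le
          _ = y i - x i := by field_simp
    calc ∑ i, x i * (Real.log (y i) - Real.log (x i)) ≤ ∑ i, (y i - x i) :=
          Finset.sum_le_sum hle
      _ = 0 := by rw [Finset.sum_sub_distrib, hysum, hxs]; ring
  have hxy : ∑ i, x i * Real.log (y i) = lam * E - Real.log Z := by
    calc ∑ i, x i * Real.log (y i) = ∑ i, (lam * (a i * x i) - Real.log Z * x i) := by
          apply Finset.sum_congr rfl; intro i _; rw [hlogy i]; ring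
      _ = lam * (∑ i, a i * x i) - Real.log Z * ∑ i, x i := by
          rw [Finset.sum_sub_distrib, Finset.mul_sum, Finset.mul_sum]
      _ = lam * E - Real.log Z := by rw [hxE, hxs]; ring
  have hsplit : (∑ i, x i * (Real.log (y i) - Real.log (x i)))
      = (∑ i, x i * Real.log (y i)) - ∑ i, x i * Real.log (x i) := by
    rw [← Finset.sum_sub_distrib]; apply Finset.sum_congr rfl; intro i _; ring
  rw [hsplit, hxy] at key
  rw [hσy]; linarith
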